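/- Every subspace X of a countably compact Hausdorff space Y is weakly ∞-regular: for every infinite closed subset F ⊆ X and every point x ∈ X \ F there exist disjoint open sets V, U ⊆ X such that x ∈ V and U ∩ F is infinite. -/

import Mathlib

open Filter Topology

lemma accPt_infinite_inter {Z : Type*} [TopologicalSpace Z] [T1Space Z]
    {y : Z} {S : Set Z} (h : AccPt y (𝓟 S)) {U : Set Z} (hU : U ∈ 𝓝 y) :
    (U ∩ S).Infinite := by
  intro hfin
  have hfin' : ((U ∩ S) \ {y}).Finite := hfin.diff
  have hcl : IsClosed ((U ∩ S) \ {y}) := hfin'.isClosed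
  have hmem : U \ ((U ∩ S) \ {y}) ∈ 𝓝 y := by
    apply Filter.inter_mem hU
    exact hcl.isOpen_compl.mem_nhds (by simp)
  rw [accPt_iff_nhds] at h
  obtain ⟨z, ⟨⟨hzU, hz2⟩, hzS⟩, hzy⟩ := h _ hmem
  exact hz2 ⟨⟨hzU, hzS⟩, hzy⟩

/-- Every subspace `X` of a countably compact Hausdorff space `Y` is weakly
∞-regular: for every infinite closed `F ⊆ X` and every `x ∈ X \ F` there are
disjoint open sets `V, U ⊆ X` with `x ∈ V` and `U ∩ F` infinite. -/
theorem stmt2 {Y : Type*} [TopologicalSpace Y] [T2Space Y]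
    (hcc : ∀ S : Set Y, S.Infinite → ∃ y : Y, AccPt y (𝓟 S))
    (s : Set Y) :
    ∀ F : Set s, IsClosed F → F.Infinite → ∀ x : s, x ∉ F →
      ∃ V U : Set s, IsOpen V ∧ IsOpen U ∧ x ∈ V ∧ (U ∩ F).Infinite ∧
        Disjoint V U := by
  intro F hFcl hFinf x hx
  set F' : Set Y := Subtype.val '' F with hF'
  have hF'inf : F'.Infinite := hFinf.image Subtype.val_injective.injOn
  obtain ⟨y, hy⟩ := hcc F' hF'inf
  -- Fᶜ is open in s, so comes from an open set W of Y
  obtain ⟨W, hWopen, hWeq⟩ := isOpen_induced_iff.mp hFcl.isOpen_compl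
  have hyx : y ≠ (x : Y) := by
    intro h
    subst h
    have hxW : (x : Y) ∈ W := by
      have : x ∈ Fᶜ := hx
      rw [← hWeq] at this
      exact this
    rw [accPt_iff_nhds] at hy
    obtain ⟨z, ⟨hzW, hzF'⟩, hzy⟩ := hy W (hWopen.mem_nhds hxW)
    obtain ⟨f, hfF, rfl⟩ := hzF'
    have : f ∈ Fᶜ := by rw [← hWeq]; exact hzW
    exact this hfF
  obtain ⟨Wy, Wx, hWyo, hWxo, hyWy, hxWx, hdisj⟩ := t2_separation hyx
  refine ⟨Subtype.val ⁻¹' Wx, Subtype.val ⁻¹' Wy, hWxo.preimage continuous_subtype_val,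
    hWyo.preimage continuous_subtype_val, hxWx, ?_, ?_⟩
  · have hinf : (Wy ∩ F').Infinite := accPt_infinite_inter hy (hWyo.mem_nhds hyWy)
    have : (Wy ∩ F') ⊆ Subtype.val '' (Subtype.val ⁻¹' Wy ∩ F) := by
      rintro z ⟨hzW, f, hfF, rfl⟩
      exact ⟨f, ⟨hzW, hfF⟩, rfl⟩
    exact Set.Infinite.of_image _ (hinf.mono this)
  · exact (hdisj.symm.preimage _)
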